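/- Suppose a ∈ C([0,∞),ℝ), c ∈ C([0,∞),[0,∞)), b ≡ 0, impulse constants b_j < 1, impulse points t_j ↑ ∞, and limsup_{n→∞} ∫_{n}^{n+1} (∏_{n−1 < t_j ≤ s}(1−b_j))·c(s)·exp(∫_{n−1}^{s} a(u) du) ds > 1 (n ranging over positive integers). Then every solution of x'(t) + a(t)x(t) + c(t)x([t−1]) = 0 (t ≠ t_i), Δx(t_i) = b_i x(t_i), is oscillatory. -/

import Mathlib

open Filter Topology intervalIntegral MeasureTheory Set

private lemma floor_eq_of' {k : ℤ} {u : ℝ} (h1 : (k:ℝ) ≤ u) (h2 : u < (k:ℝ)+1) : ⌊u⌋ = k :=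
  Int.floor_eq_iff.mpr ⟨h1, by exact_mod_cast h2⟩

private lemma finprod_eq_prod_range (bi ti : ℕ → ℝ) (m s : ℝ) (J0 : ℕ)
    (hJ0 : ∀ j, J0 ≤ j → s < ti j) :
    (∏ᶠ j ∈ {j : ℕ | m < ti j ∧ ti j ≤ s}, (1 - bi j)) =
      ∏ j ∈ Finset.range J0, (if m < ti j ∧ ti j ≤ s then 1 - bi j else 1) := by
  rw [finprod_mem_def, finprod_eq_prod_of_mulSupport_subset _
    (s := Finset.range J0) ?_]
  · refine Finset.prod_congr rfl fun j _ => ?_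
    rw [Set.mulIndicator_apply]
    simp only [Set.mem_setOf_eq]
  · intro j hj
    have hjS : j ∈ {j : ℕ | m < ti j ∧ ti j ≤ s} :=
      Set.mem_of_mem_of_subset hj (Set.mulSupport_mulIndicator_subset)
    simp only [Finset.coe_range, Set.mem_Iio]
    by_contra h
    exact absurd hjS.2 (not_le.mpr (hJ0 j (not_lt.mp h)))

private lemma osc_key
    (a c : ℝ → ℝ) (ha : Continuous a) (hc : Continuous c) (hcnn : ∀ t, 0 ≤ c t)
    (bi : ℕ → ℝ) (hbi : ∀ i, bi i < 1)
    (ti : ℕ → ℝ) (hti : StrictMono ti)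
    (htiTop : Tendsto ti atTop atTop)
    (x : ℝ → ℝ)
    (hsol : ∀ t, 0 < t → (∀ i, t ≠ ti i) →
      HasDerivAt x (-(a t * x t + c t * x ((⌊t - 1⌋ : ℤ) : ℝ))) t)
    (hrc : ∀ i, ContinuousWithinAt x (Set.Ici (ti i)) (ti i))
    (himp : ∀ i, Tendsto x (nhdsWithin (ti i) (Set.Iio (ti i)))
      (nhds ((1 - bi i) * x (ti i))))
    (T : ℝ) (hx : ∀ t, T < t → 0 < x t)
    (n : ℕ) (hn2 : 2 ≤ (n:ℝ)) (hnT : T + 2 < (n:ℝ)) :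
    (∫ s in (n : ℝ)..((n : ℝ) + 1),
      (∏ᶠ j ∈ {j : ℕ | (n : ℝ) - 1 < ti j ∧ ti j ≤ s}, (1 - bi j)) * c s *
        Real.exp (∫ u in ((n : ℝ) - 1)..s, a u)) ≤ 1 := by
  classical
  set m : ℝ := (n:ℝ) - 1 with hm
  have hmpos : (0:ℝ) < m := by rw [hm]; linarith
  obtain ⟨J0, hJ0⟩ : ∃ J0 : ℕ, ∀ j, J0 ≤ j → m + 2 < ti j :=
    eventually_atTop.mp (htiTop.eventually_gt_atTop (m + 2))
  set Q : ℝ → ℝ := fun s =>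
    ∏ j ∈ Finset.range J0, (if m < ti j ∧ ti j ≤ s then 1 - bi j else 1) with hQ
  set E : ℝ → ℝ := fun t => Real.exp (∫ u in m..t, a u) with hE
  set y : ℝ → ℝ := fun t => x t * Q t * E t with hy
  set f' : ℝ → ℝ := fun s => -(Q s * c s * E s * x ((⌊s - 1⌋ : ℤ) : ℝ)) with hf'
  have hEpos : ∀ t, 0 < E t := fun t => Real.exp_pos _
  have hEm : E m = 1 := by simp [hE]
  have hEderiv : ∀ t, HasDerivAt E (a t * E t) t := by
    intro t
    have h1 : HasDerivAt (fun u => ∫ v in m..u, a v) (a t) t :=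
      intervalIntegral.integral_hasDerivAt_right (ha.intervalIntegrable m t)
        (ha.stronglyMeasurableAtFilter volume (𝓝 t)) ha.continuousAt
    have h2 := h1.exp
    simpa [hE, mul_comm] using h2
  have hEcont : Continuous E :=
    continuous_iff_continuousAt.mpr fun t => (hEderiv t).continuousAt
  have hQpos : ∀ s, 0 < Q s := by
    intro s; apply Finset.prod_pos; intro j _
    split
    · linarith [hbi j]
    · norm_num
  have hQm : Q m = 1 := by
    apply Finset.prod_eq_one; intro j _
    rw [if_neg]; rintro ⟨h1, h2⟩; linarith
  have hxright : ∀ s : ℝ, 0 < s → ContinuousWithinAt x (Ici s) s := by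
    intro s hs
    by_cases hex : ∃ i, ti i = s
    · obtain ⟨i, rfl⟩ := hex; exact hrc i
    · push_neg at hex
      exact ((hsol s hs fun i h => hex i h.symm).continuousAt).continuousWithinAt
  have hQright : ∀ s : ℝ, ∀ᶠ t in 𝓝[Ici s] s, Q t = Q s := by
    intro s
    have h : ∀ j ∈ Finset.range J0, ∀ᶠ t in 𝓝[Ici s] s,
        ((m < ti j ∧ ti j ≤ t) ↔ (m < ti j ∧ ti j ≤ s)) := by
      intro j _
      rcases le_or_gt (ti j) s with h1 | h1
      · filter_upwards [self_mem_nhdsWithin] with t ht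
        exact ⟨fun hh => ⟨hh.1, h1⟩, fun hh => ⟨hh.1, h1.trans ht⟩⟩
      · filter_upwards [nhdsWithin_le_nhds (Iio_mem_nhds h1)] with t ht
        constructor
        · rintro ⟨hh1, hh2⟩; exact absurd hh2 (not_le.mpr ht)
        · rintro ⟨hh1, hh2⟩; exact absurd hh2 (not_le.mpr h1)
    rw [← eventually_all_finset] at h
    filter_upwards [h] with t ht
    exact Finset.prod_congr rfl fun j hj => by rw [if_congr (ht j hj) rfl rfl]
  have hQlocconst : ∀ s : ℝ, (∀ j, j < J0 → ti j ≠ s) → ∀ᶠ t in 𝓝 s, Q t = Q s := by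
    intro s hne
    have h : ∀ j ∈ Finset.range J0, ∀ᶠ t in 𝓝 s,
        ((m < ti j ∧ ti j ≤ t) ↔ (m < ti j ∧ ti j ≤ s)) := by
      intro j hj
      rcases lt_trichotomy (ti j) s with h1 | h1 | h1
      · filter_upwards [Ioi_mem_nhds h1] with t ht
        exact ⟨fun hh => ⟨hh.1, h1.le⟩, fun hh => ⟨hh.1, le_of_lt ht⟩⟩
      · exact absurd h1 (hne j (Finset.mem_range.mp hj))
      · filter_upwards [Iio_mem_nhds h1] with t ht
        constructor
        · rintro ⟨hh1, hh2⟩; exact absurd hh2 (not_le.mpr ht)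
        · rintro ⟨hh1, hh2⟩; exact absurd hh2 (not_le.mpr h1)
    rw [← eventually_all_finset] at h
    filter_upwards [h] with t ht
    exact Finset.prod_congr rfl fun j hj => by rw [if_congr (ht j hj) rfl rfl]
  have hQleft : ∀ s k, k < J0 → ti k = s → m < s →
      (Q s = (1 - bi k) * ∏ j ∈ (Finset.range J0).erase k,
          (if m < ti j ∧ ti j ≤ s then 1 - bi j else 1)) ∧
      (∀ᶠ t in 𝓝[Iio s] s, Q t = ∏ j ∈ (Finset.range J0).erase k,
          (if m < ti j ∧ ti j ≤ s then 1 - bi j else 1)) := by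
    intro s k hkJ hks hms
    have hkmem : k ∈ Finset.range J0 := Finset.mem_range.mpr hkJ
    constructor
    · simp only [hQ]
      rw [← Finset.mul_prod_erase _ _ hkmem]
      congr 1
      rw [if_pos ⟨by rw [hks]; exact hms, by rw [hks]⟩]
    · have h : ∀ j ∈ Finset.range J0, ∀ᶠ t in 𝓝[Iio s] s,
          ((m < ti j ∧ ti j ≤ t) ↔ (m < ti j ∧ ti j ≤ s ∧ j ≠ k)) := by
        intro j _
        rcases lt_trichotomy (ti j) s with h1 | h1 | h1
        · filter_upwards [nhdsWithin_le_nhds (Ioi_mem_nhds h1)] with t ht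
          refine ⟨fun hh => ⟨hh.1, h1.le, fun hjk => ?_⟩, fun hh => ⟨hh.1, (le_of_lt ht)⟩⟩
          rw [hjk, hks] at h1; exact lt_irrefl _ h1
        · have hjk : j = k := hti.injective (by rw [h1, hks])
          filter_upwards [self_mem_nhdsWithin] with t ht
          constructor
          · rintro ⟨hh1, hh2⟩
            exact absurd h1 (ne_of_lt (lt_of_le_of_lt hh2 ht))
          · rintro ⟨_, _, hne⟩; exact absurd hjk hne
        · filter_upwards [self_mem_nhdsWithin] with t ht
          constructor
          · rintro ⟨_, hh2⟩; exact absurd hh2 (not_le.mpr (lt_trans ht h1))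
          · rintro ⟨_, hh2, _⟩; exact absurd hh2 (not_le.mpr h1)
      rw [← eventually_all_finset] at h
      filter_upwards [h] with t ht
      simp only [hQ]
      rw [show (∏ j ∈ Finset.range J0, if m < ti j ∧ ti j ≤ t then 1 - bi j else 1)
          = ∏ j ∈ Finset.range J0,
            (if m < ti j ∧ ti j ≤ s ∧ j ≠ k then 1 - bi j else 1) from
        Finset.prod_congr rfl fun j hj => by rw [if_congr (ht j hj) rfl rfl]]
      rw [← Finset.prod_erase (Finset.range J0)
        (f := fun j => if m < ti j ∧ ti j ≤ s ∧ j ≠ k then 1 - bi j else 1) (a := k)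
        (show (if m < ti k ∧ ti k ≤ s ∧ k ≠ k then 1 - bi k else 1) = 1 by
          rw [if_neg]; rintro ⟨_, _, hne⟩; exact hne rfl)]
      refine Finset.prod_congr rfl fun j hj => ?_
      have hjk := Finset.ne_of_mem_erase hj
      have hiff : (m < ti j ∧ ti j ≤ s ∧ j ≠ k) ↔ (m < ti j ∧ ti j ≤ s) := by
        constructor
        · rintro ⟨h1', h2', _⟩; exact ⟨h1', h2'⟩
        · rintro ⟨h1', h2'⟩; exact ⟨h1', h2', hjk⟩
      rw [if_congr hiff rfl rfl]
  have hIccpos : ∀ s : ℝ, s ∈ Icc m (m+2) → 0 < s := fun s hs => lt_of_lt_of_le hmpos hs.1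
  have hycont : ContinuousOn y (Icc m (m + 2)) := by
    intro s hs
    rcases eq_or_lt_of_le hs.1 with hsm | hsm
    · subst hsm
      apply ContinuousWithinAt.mono _ (Icc_subset_Ici_self)
      have hQc : ContinuousWithinAt Q (Ici m) m :=
        Filter.Tendsto.congr' ((hQright m).mono fun t h => h.symm) tendsto_const_nhds
      exact ((hxright m hmpos).mul hQc).mul hEcont.continuousAt.continuousWithinAt
    · by_cases hex : ∃ k, k < J0 ∧ ti k = s
      · obtain ⟨k, hkJ, hks⟩ := hex
        have h2 : ContinuousWithinAt y (Ici s) s := by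
          have hQc : ContinuousWithinAt Q (Ici s) s :=
            Filter.Tendsto.congr' ((hQright s).mono fun t h => h.symm) tendsto_const_nhds
          exact ((hxright s (hIccpos s hs)).mul hQc).mul
            hEcont.continuousAt.continuousWithinAt
        have h1 : ContinuousWithinAt y (Iio s) s := by
          obtain ⟨hQsplit, hQev⟩ := hQleft s k hkJ hks hsm
          set QK := ∏ j ∈ (Finset.range J0).erase k,
            (if m < ti j ∧ ti j ≤ s then 1 - bi j else 1) with hQK
          have hxs : Tendsto x (𝓝[Iio s] s) (𝓝 ((1 - bi k) * x s)) := by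
            have h3 := himp k; rw [hks] at h3; exact h3
          have hEt : Tendsto E (𝓝[Iio s] s) (𝓝 (E s)) :=
            hEcont.continuousAt.continuousWithinAt
          have hT : Tendsto (fun t => x t * QK * E t) (𝓝[Iio s] s)
              (𝓝 ((1 - bi k) * x s * QK * E s)) := (hxs.mul_const QK).mul hEt
          have h4 : Tendsto y (𝓝[Iio s] s) (𝓝 ((1 - bi k) * x s * QK * E s)) := by
            apply hT.congr'
            filter_upwards [hQev] with t ht
            simp only [hy]; rw [ht]
          have hval : (1 - bi k) * x s * QK * E s = y s := by
            simp only [hy]; rw [hQsplit]; ring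
          rw [hval] at h4; exact h4
        exact (h1.union h2).mono (fun t _ => by
          rcases lt_or_ge t s with h | h
          · exact Or.inl h
          · exact Or.inr h)
      · push_neg at hex
        have hne : ∀ i, ti i ≠ s := by
          intro i
          by_cases hiJ : i < J0
          · exact hex i hiJ
          · intro h
            have h5 := hJ0 i (not_lt.mp hiJ); rw [h] at h5; linarith [hs.2]
        have hQc : ContinuousAt Q s :=
          Filter.Tendsto.congr'
            ((hQlocconst s fun j _ => hne j).mono fun t h => h.symm) tendsto_const_nhds
        have hxc : ContinuousAt x s :=
          (hsol s (hIccpos s hs) fun i h => hne i h.symm).continuousAt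
        exact ((hxc.mul hQc).mul hEcont.continuousAt).continuousWithinAt
  have hyderiv : ∀ s ∈ Ioo m (m+2) \ Set.range ti, HasDerivAt y (f' s) s := by
    rintro s ⟨hs, hsr⟩
    have hne : ∀ i, s ≠ ti i := fun i h => hsr ⟨i, h.symm⟩
    have hspos : 0 < s := lt_trans hmpos hs.1
    have hxd := hsol s hspos hne
    have hq : ∀ᶠ t in 𝓝 s, Q t = Q s := hQlocconst s fun j _ h => hsr ⟨j, h⟩
    have h1 : HasDerivAt (fun t => x t * Q s * E t)
        (-(a s * x s + c s * x ((⌊s - 1⌋ : ℤ) : ℝ)) * Q s * E s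
          + x s * Q s * (a s * E s)) s :=
      (hxd.mul_const (Q s)).mul (hEderiv s)
    have h2 : HasDerivAt y
        (-(a s * x s + c s * x ((⌊s - 1⌋ : ℤ) : ℝ)) * Q s * E s
          + x s * Q s * (a s * E s)) s := by
      apply h1.congr_of_eventuallyEq
      filter_upwards [hq] with t ht
      simp only [hy]; rw [ht]
    convert h2 using 1
    simp only [hf']; ring
  have hmeasQ : Measurable Q := by
    apply Finset.measurable_prod
    intro j _
    have hset : MeasurableSet {s0 : ℝ | m < ti j ∧ ti j ≤ s0} := by
      by_cases hmj : m < ti j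
      · have h6 : {s0 : ℝ | m < ti j ∧ ti j ≤ s0} = Ici (ti j) := by ext s0; simp [hmj]
        rw [h6]; exact measurableSet_Ici
      · have h6 : {s0 : ℝ | m < ti j ∧ ti j ≤ s0} = ∅ := by ext s0; simp [hmj]
        rw [h6]; exact MeasurableSet.empty
    exact Measurable.ite hset measurable_const measurable_const
  have hmeasfl : Measurable (fun s0 : ℝ => x ((⌊s0 - 1⌋ : ℤ) : ℝ)) := by
    have h1 : Measurable fun s0 : ℝ => (⌊s0 - 1⌋ : ℤ) :=
      Int.measurable_floor.comp (measurable_id.sub measurable_const)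
    exact (Measurable.of_discrete (f := fun k : ℤ => x ((k : ℤ) : ℝ))).comp h1
  have hmeasf' : Measurable f' :=
    (((hmeasQ.mul hc.measurable).mul hEcont.measurable).mul hmeasfl).neg
  obtain ⟨C1, hC1⟩ := (isCompact_Icc (a := m) (b := m + 2)).exists_bound_of_continuousOn
      ((hc.mul hEcont).continuousOn)
  have hCQb : ∀ s0 : ℝ, |Q s0| ≤ ∏ j ∈ Finset.range J0, max 1 |1 - bi j| := by
    intro s0
    simp only [hQ]
    rw [Finset.abs_prod]
    apply Finset.prod_le_prod (fun j _ => abs_nonneg _)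
    intro j _
    split
    · exact le_max_right _ _
    · simp
  set CQ := ∏ j ∈ Finset.range J0, max 1 |1 - bi j| with hCQ
  set CX := max (|x ((n:ℝ) - 2)|) (max (|x ((n:ℝ) - 1)|) (|x (n:ℝ)|)) with hCX
  have hflrange : ∀ s0, s0 ∈ Icc m (m+2) →
      ((n:ℤ) - 2 ≤ ⌊s0 - 1⌋ ∧ ⌊s0 - 1⌋ ≤ (n:ℤ)) := by
    intro s0 hs0
    constructor
    · apply Int.le_floor.mpr
      push_cast
      have := hs0.1
      rw [hm] at this
      linarith
    · have h7 : s0 - 1 ≤ (n:ℝ) := by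
        have := hs0.2; rw [hm] at this; linarith
      calc ⌊s0 - 1⌋ ≤ ⌊(n:ℝ)⌋ := Int.floor_le_floor h7
        _ = (n:ℤ) := Int.floor_natCast n
  have hfl3 : ∀ s0 ∈ Icc m (m+2), |x ((⌊s0 - 1⌋ : ℤ) : ℝ)| ≤ CX := by
    intro s0 hs0
    obtain ⟨hlow, hhigh⟩ := hflrange s0 hs0
    have h8 : ⌊s0-1⌋ = (n:ℤ)-2 ∨ ⌊s0-1⌋ = (n:ℤ)-1 ∨ ⌊s0-1⌋ = (n:ℤ) := by omega
    rw [hCX]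
    rcases h8 with h | h | h <;> rw [h] <;> push_cast
    · exact le_max_left _ _
    · exact le_trans (le_max_left _ _) (le_max_right _ _)
    · exact le_trans (le_max_right _ _) (le_max_right _ _)
  have hC10 : 0 ≤ C1 := le_trans (norm_nonneg _) (hC1 m (left_mem_Icc.mpr (by linarith)))
  have hCQ0 : 0 ≤ CQ := le_trans (abs_nonneg _) (hCQb 0)
  have hCX0 : 0 ≤ CX := le_trans (abs_nonneg _) (le_max_left _ _)
  have hbound : ∀ s0 ∈ Icc m (m+2), ‖f' s0‖ ≤ CQ * C1 * CX := by
    intro s0 hs0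
    have h1 : ‖f' s0‖ = |Q s0| * |c s0 * E s0| * |x ((⌊s0 - 1⌋ : ℤ) : ℝ)| := by
      simp only [hf', Real.norm_eq_abs, abs_neg, abs_mul]
      ring
    rw [h1]
    have h2 := hC1 s0 hs0
    rw [Real.norm_eq_abs] at h2
    exact mul_le_mul (mul_le_mul (hCQb s0) h2 (abs_nonneg _) hCQ0) (hfl3 s0 hs0)
      (abs_nonneg _) (mul_nonneg hCQ0 hC10)
  have hint : IntervalIntegrable f' volume m (m + 2) := by
    rw [intervalIntegrable_iff_integrableOn_Icc_of_le (by linarith)]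
    apply MeasureTheory.Integrable.mono' (g := fun _ => CQ * C1 * CX)
      (integrableOn_const measure_Icc_lt_top.ne)
      hmeasf'.aestronglyMeasurable.restrict
    exact (ae_restrict_iff' measurableSet_Icc).mpr (Filter.Eventually.of_forall hbound)
  have hint1 : IntervalIntegrable f' volume m (m + 1) :=
    hint.mono_set (by
      rw [uIcc_of_le (by linarith : m ≤ m + 1), uIcc_of_le (by linarith : m ≤ m + 2)]
      exact Icc_subset_Icc_right (by linarith))
  have hint2 : IntervalIntegrable f' volume (m + 1) (m + 2) :=
    hint.mono_set (by
      rw [uIcc_of_le (by linarith : m + 1 ≤ m + 2), uIcc_of_le (by linarith : m ≤ m + 2)]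
      exact Icc_subset_Icc_left (by linarith))
  have hFTC : ∀ α β : ℝ, m ≤ α → α ≤ β → β ≤ m + 2 →
      IntervalIntegrable f' volume α β → ∫ s0 in α..β, f' s0 = y β - y α := by
    intro α β h1 h2 h3 hi
    apply MeasureTheory.integral_eq_of_hasDerivAt_off_countable_of_le y f' h2
      (Set.countable_range ti) (hycont.mono (Icc_subset_Icc h1 h3)) _ hi
    intro s0 hs0
    exact hyderiv s0 ⟨Ioo_subset_Ioo h1 h3 hs0.1, hs0.2⟩
  have hxfl : ∀ s0 ∈ Icc m (m+2), 0 < x ((⌊s0 - 1⌋ : ℤ) : ℝ) := by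
    intro s0 hs0
    apply hx
    have hlow := (hflrange s0 hs0).1
    have h9 : ((n:ℝ) - 2) ≤ ((⌊s0 - 1⌋ : ℤ) : ℝ) := by exact_mod_cast Int.cast_le.mpr hlow
    linarith
  have hA := hFTC m (m+1) le_rfl (by linarith) (by linarith) hint1
  have hB := hFTC (m+1) (m+2) (by linarith) (by linarith) le_rfl hint2
  have hym : y m = x m := by simp only [hy]; rw [hQm, hEm]; ring
  have hAle : y (m+1) ≤ y m := by
    have h0 : 0 ≤ ∫ s0 in m..(m+1), -f' s0 := by
      apply intervalIntegral.integral_nonneg (by linarith)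
      intro u hu
      have hu' : u ∈ Icc m (m+2) := ⟨hu.1, by linarith [hu.2]⟩
      simp only [hf', neg_neg]
      exact mul_nonneg (mul_nonneg (mul_nonneg (hQpos u).le (hcnn u)) (hEpos u).le)
        (hxfl u hu').le
    rw [intervalIntegral.integral_neg, hA] at h0
    linarith
  have hxm : 0 < x m := hx m (by rw [hm]; linarith)
  have hy2pos : 0 < y (m+2) := by
    simp only [hy]
    have hx2 : 0 < x (m+2) := hx _ (by rw [hm]; linarith)
    exact mul_pos (mul_pos hx2 (hQpos _)) (hEpos _)
  have haeeq : ∀ᵐ s0 ∂(volume : Measure ℝ), s0 ∈ Set.uIoc (m+1) (m+2) →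
      Q s0 * c s0 * E s0 = (x m)⁻¹ * -f' s0 := by
    have hsing : ∀ᵐ s0 ∂(volume : Measure ℝ), s0 ≠ m + 2 := by
      have h10 : {s0 : ℝ | ¬ s0 ≠ m + 2} = {m + 2} := by ext s0; simp
      rw [MeasureTheory.ae_iff, h10]
      exact Real.volume_singleton
    filter_upwards [hsing] with s0 hne0 hmem
    rw [Set.uIoc_of_le (by linarith : m + 1 ≤ m + 2)] at hmem
    have h1 : m + 1 < s0 := hmem.1
    have h2 : s0 < m + 2 := lt_of_le_of_ne hmem.2 hne0
    have hfl : ⌊s0 - 1⌋ = (n:ℤ) - 1 := by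
      apply floor_eq_of'
      · push_cast; rw [hm] at h1; linarith
      · push_cast; rw [hm] at h2; linarith
    simp only [hf', neg_neg]
    rw [hfl]
    have hcast : (((n:ℤ) - 1 : ℤ) : ℝ) = m := by push_cast; rw [hm]
    rw [hcast]
    field_simp
  have hcongr2 : ∫ s0 in (m+1)..(m+2), Q s0 * c s0 * E s0
      = (x m)⁻¹ * ∫ s0 in (m+1)..(m+2), -f' s0 := by
    rw [← intervalIntegral.integral_const_mul]
    exact intervalIntegral.integral_congr_ae haeeq
  have hval2 : ∫ s0 in (m+1)..(m+2), -f' s0 = y (m+1) - y (m+2) := by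
    rw [intervalIntegral.integral_neg, hB]; ring
  have hb1 : (n:ℝ) = m + 1 := by rw [hm]; ring
  rw [hb1, show m + 1 + 1 = m + 2 from by ring]
  have hstep : ∫ s in (m+1)..(m+2),
      (∏ᶠ j ∈ {j : ℕ | m < ti j ∧ ti j ≤ s}, (1 - bi j)) * c s *
        Real.exp (∫ u in m..s, a u)
      = ∫ s0 in (m+1)..(m+2), Q s0 * c s0 * E s0 := by
    apply intervalIntegral.integral_congr
    intro s hsm
    beta_reduce
    rw [Set.uIcc_of_le (by linarith : m + 1 ≤ m + 2)] at hsm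
    rw [finprod_eq_prod_range bi ti m s J0
      (fun j hj => lt_of_le_of_lt hsm.2 (hJ0 j hj))]
  rw [hstep, hcongr2, hval2]
  rw [inv_mul_le_iff₀ hxm]
  linarith

private lemma osc_nonneg
    (a c : ℝ → ℝ) (hcnn : ∀ t, 0 ≤ c t)
    (bi ti : ℕ → ℝ) (hbi : ∀ i, bi i < 1)
    (htiTop : Tendsto ti atTop atTop) (n : ℕ) :
    0 ≤ ∫ s in (n : ℝ)..((n : ℝ) + 1),
      (∏ᶠ j ∈ {j : ℕ | (n : ℝ) - 1 < ti j ∧ ti j ≤ s}, (1 - bi j)) * c s *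
        Real.exp (∫ u in ((n : ℝ) - 1)..s, a u) := by
  apply intervalIntegral.integral_nonneg (by linarith)
  intro s _
  rcases eventually_atTop.mp (htiTop.eventually_gt_atTop s) with ⟨J0, hJ0⟩
  rw [finprod_eq_prod_range bi ti _ s J0 hJ0]
  apply mul_nonneg (mul_nonneg _ (hcnn s)) (Real.exp_pos _).le
  apply Finset.prod_nonneg
  intro j _
  split
  · linarith [hbi j]
  · norm_num

/-- Corollary 2: if
`limsup_{n→∞} ∫_{n}^{n+1} (∏_{n-1 < t_j ≤ s}(1-b_j)) c(s) exp(∫_{n-1}^{s} a) ds > 1`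
(`n` ranging over positive integers), then every solution of
`x'(t) + a(t)x(t) + c(t)x(⌊t-1⌋) = 0` (`t ≠ t_i`), `Δx(t_i) = b_i x(t_i)`, is
oscillatory. -/
theorem oscillation_corollary_two
    (a c : ℝ → ℝ) (ha : Continuous a) (hc : Continuous c) (hcnn : ∀ t, 0 ≤ c t)
    (bi : ℕ → ℝ) (hbi : ∀ i, bi i < 1)
    (ti : ℕ → ℝ) (hti : StrictMono ti) (hti0 : 0 < ti 0)
    (htiTop : Tendsto ti atTop atTop)
    (hcrit : 1 < Filter.limsup (fun n : ℕ => ∫ s in (n : ℝ)..((n : ℝ) + 1),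
      (∏ᶠ j ∈ {j : ℕ | (n : ℝ) - 1 < ti j ∧ ti j ≤ s}, (1 - bi j)) * c s *
        Real.exp (∫ u in ((n : ℝ) - 1)..s, a u)) Filter.atTop)
    (x : ℝ → ℝ)
    (hsol : ∀ t, 0 < t → (∀ i, t ≠ ti i) →
      HasDerivAt x (-(a t * x t + c t * x ((⌊t - 1⌋ : ℤ) : ℝ))) t)
    (hrc : ∀ i, ContinuousWithinAt x (Set.Ici (ti i)) (ti i))
    (himp : ∀ i, Tendsto x (nhdsWithin (ti i) (Set.Iio (ti i)))
      (nhds ((1 - bi i) * x (ti i)))) :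
    (¬ ∃ T, ∀ t, T < t → 0 < x t) ∧ (¬ ∃ T, ∀ t, T < t → x t < 0) := by
  have key : ∀ z : ℝ → ℝ,
      (∀ t, 0 < t → (∀ i, t ≠ ti i) →
        HasDerivAt z (-(a t * z t + c t * z ((⌊t - 1⌋ : ℤ) : ℝ))) t) →
      (∀ i, ContinuousWithinAt z (Set.Ici (ti i)) (ti i)) →
      (∀ i, Tendsto z (nhdsWithin (ti i) (Set.Iio (ti i)))
        (nhds ((1 - bi i) * z (ti i)))) →
      ¬ ∃ T, ∀ t, T < t → 0 < z t := by
    rintro z hsolz hrcz himpz ⟨T, hzx⟩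
    have hub : Filter.limsup (fun n : ℕ => ∫ s in (n : ℝ)..((n : ℝ) + 1),
        (∏ᶠ j ∈ {j : ℕ | (n : ℝ) - 1 < ti j ∧ ti j ≤ s}, (1 - bi j)) * c s *
          Real.exp (∫ u in ((n : ℝ) - 1)..s, a u)) Filter.atTop ≤ 1 := by
      apply Filter.limsup_le_of_le
      · exact isCoboundedUnder_le_of_le atTop fun n =>
          osc_nonneg a c hcnn bi ti hbi htiTop n
      · rw [eventually_atTop]
        refine ⟨⌈T⌉₊ + 3, fun n hn => ?_⟩
        have hc1 : ((⌈T⌉₊ + 3 : ℕ) : ℝ) ≤ (n:ℝ) := by exact_mod_cast hn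
        have hc2 : T ≤ (⌈T⌉₊ : ℝ) := Nat.le_ceil T
        push_cast at hc1
        exact osc_key a c ha hc hcnn bi hbi ti hti htiTop z hsolz hrcz himpz T hzx n
          (by linarith) (by linarith)
    linarith [hcrit]
  refine ⟨key x hsol hrc himp, ?_⟩
  rintro ⟨T, hneg⟩
  refine key (fun t => -x t) ?_ ?_ ?_ ⟨T, fun t ht => neg_pos.mpr (hneg t ht)⟩
  · intro t ht hne
    have h1 : HasDerivAt (fun t => -x t) _ t := (hsol t ht hne).neg
    convert h1 using 1
    ring
  · exact fun i => (hrc i).neg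
  · intro i
    have h1 := (himp i).neg
    convert h1 using 2
    ring
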